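/- Let (Xᵢ, Yᵢ, Rᵢ)_{i≥1} be i.i.d. copies of (X, Y, R), with Y taking values in a finite label set C and R in {0,1}, satisfying: R is conditionally independent of X given Y, and E[R | Y] = φ(Y) almost surely where φ : C → ℝ with φ(k) ≥ c for some c > 0 and φ(k) ≤ 1 for all k. Let ℓ be a bounded measurable loss, |ℓ(X,Y)| ≤ L. Let (φ̂ⁿ)_{n≥1} be any sequence of C-indexed random vectors (estimators of the mechanism, possibly depending on the first n samples) such that φ̂ⁿ(k) → φ(k) in probability for every k ∈ C, and φ̂ⁿ(k) ≥ c for all k, n. Then the plug-in IPW empirical risk (1/n) Σ_{i=1}^n Rᵢ · ℓ(Xᵢ, Yᵢ) / φ̂ⁿ(Yᵢ) converges in probability to the theoretical risk E[ℓ(X,Y)] as n → ∞. -/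

import Mathlib

open MeasureTheory ProbabilityTheory Filter

open scoped ENNReal

section Aux
variable {Ω : Type*} [MeasurableSpace Ω] {μ : Measure Ω}

lemma myTIM_iff_real {f : ℕ → Ω → ℝ} {g : Ω → ℝ} :
    TendstoInMeasure μ f atTop g ↔
      ∀ ε : ℝ, 0 < ε → Tendsto (fun n => μ {x | ε ≤ dist (f n x) (g x)}) atTop (nhds 0) := by
  constructor
  · intro h ε hε
    convert h (ENNReal.ofReal ε) (by simp [hε]) using 4 with n x
    funext x
    rw [edist_dist, ENNReal.ofReal_le_ofReal_iff dist_nonneg]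
  · intro h
    apply tendstoInMeasure_of_ne_top
    intro ε hε hne
    convert h ε.toReal (ENNReal.toReal_pos hε.ne' hne) using 4 with n x
    funext x
    rw [edist_dist, ENNReal.le_ofReal_iff_toReal_le hne dist_nonneg]

lemma myTendstoInMeasure_zero :
    TendstoInMeasure μ (fun (_ : ℕ) (_ : Ω) => (0 : ℝ)) atTop (fun _ => (0 : ℝ)) := by
  rw [myTIM_iff_real]
  intro ε hε
  have h : (fun _ : ℕ => μ {x | ε ≤ dist ((0:ℝ)) ((0:ℝ))}) = fun _ : ℕ => (0 : ℝ≥0∞) := by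
    funext n
    convert measure_empty (μ := μ)
    ext x
    simp [hε.not_ge]
  show Tendsto (fun _ : ℕ => μ {x | ε ≤ dist ((0:ℝ)) ((0:ℝ))}) atTop (nhds 0)
  rw [h]
  exact tendsto_const_nhds

lemma myTendstoInMeasure_abs_sub {f : ℕ → Ω → ℝ} {g : Ω → ℝ}
    (hf : TendstoInMeasure μ f atTop g) :
    TendstoInMeasure μ (fun n ω => |f n ω - g ω|) atTop (fun _ => (0 : ℝ)) := by
  rw [myTIM_iff_real] at hf ⊢
  intro ε hε
  have := hf ε hε
  convert this using 2 with n
  congr 1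
  ext x
  simp [Real.dist_eq, abs_abs]

lemma myTendstoInMeasure_add_zero {f g : ℕ → Ω → ℝ}
    (hf : TendstoInMeasure μ f atTop (fun _ => (0 : ℝ)))
    (hg : TendstoInMeasure μ g atTop (fun _ => (0 : ℝ))) :
    TendstoInMeasure μ (fun n ω => f n ω + g n ω) atTop (fun _ => (0 : ℝ)) := by
  rw [myTIM_iff_real] at hf hg ⊢
  intro ε hε
  have hsub : ∀ n, μ {x | ε ≤ dist (f n x + g n x) ((fun _ : Ω => (0:ℝ)) x)}
      ≤ μ {x | ε / 2 ≤ dist (f n x) ((fun _ : Ω => (0:ℝ)) x)}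
        + μ {x | ε / 2 ≤ dist (g n x) ((fun _ : Ω => (0:ℝ)) x)} := by
    intro n
    refine le_trans (measure_mono ?_) (measure_union_le _ _)
    intro x hx
    simp only [Set.mem_setOf_eq, Real.dist_eq, sub_zero, Set.mem_union] at hx ⊢
    by_contra hcon
    push_neg at hcon
    have h1 := abs_add_le (f n x) (g n x)
    linarith [hcon.1, hcon.2]
  have h1 := (hf (ε/2) (by linarith)).add (hg (ε/2) (by linarith))
  rw [add_zero] at h1
  exact tendsto_of_tendsto_of_tendsto_of_le_of_le tendsto_const_nhds h1
    (fun n => zero_le) hsub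

lemma myTendstoInMeasure_const_mul {f : ℕ → Ω → ℝ} (a : ℝ)
    (hf : TendstoInMeasure μ f atTop (fun _ => (0 : ℝ))) :
    TendstoInMeasure μ (fun n ω => a * f n ω) atTop (fun _ => (0 : ℝ)) := by
  rcases eq_or_ne a 0 with rfl | ha
  · simpa using myTendstoInMeasure_zero (μ := μ)
  · rw [myTIM_iff_real] at hf ⊢
    intro ε hε
    have hapos : 0 < |a| := abs_pos.2 ha
    have := hf (ε / |a|) (div_pos hε hapos)
    convert this using 2 with n
    congr 1
    ext x
    simp only [Set.mem_setOf_eq, Real.dist_eq, sub_zero, abs_mul]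
    rw [div_le_iff₀ hapos, mul_comm]

lemma myTendstoInMeasure_finset_sum {ι : Type*} (s : Finset ι) (F : ι → ℕ → Ω → ℝ)
    (h : ∀ k ∈ s, TendstoInMeasure μ (F k) atTop (fun _ => (0 : ℝ))) :
    TendstoInMeasure μ (fun n ω => ∑ k ∈ s, F k n ω) atTop (fun _ => (0 : ℝ)) := by
  classical
  induction s using Finset.induction with
  | empty => simpa using myTendstoInMeasure_zero (μ := μ)
  | @insert x s hx ih =>
    simp only [Finset.sum_insert hx]
    exact myTendstoInMeasure_add_zero (h x (Finset.mem_insert_self x s))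
      (ih fun k hk => h k (Finset.mem_insert_of_mem hk))

lemma myTendstoInMeasure_of_dominated {f : ℕ → Ω → ℝ} {g : Ω → ℝ} {h : ℕ → Ω → ℝ}
    (hbd : ∀ n ω, |f n ω - g ω| ≤ h n ω)
    (hh : TendstoInMeasure μ h atTop (fun _ => (0 : ℝ))) :
    TendstoInMeasure μ f atTop g := by
  rw [myTIM_iff_real] at hh ⊢
  intro ε hε
  have key : ∀ n, μ {x | ε ≤ dist (f n x) (g x)}
      ≤ μ {x | ε ≤ dist (h n x) ((fun _ : Ω => (0:ℝ)) x)} := by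
    intro n
    apply measure_mono
    intro x hx
    simp only [Set.mem_setOf_eq, Real.dist_eq, sub_zero] at hx ⊢
    exact hx.trans ((hbd n x).trans (le_abs_self _))
  exact tendsto_of_tendsto_of_tendsto_of_le_of_le tendsto_const_nhds (hh ε hε)
    (fun n => zero_le) key

lemma myConstant_on_fiber {Ω C : Type*} [MeasurableSpace C] [MeasurableSingletonClass C]
    {Y : Ω → C} {F : Ω → ℝ}
    (hF : Measurable[MeasurableSpace.comap Y inferInstance] F)
    {ω ω' : Ω} (h : Y ω = Y ω') : F ω = F ω' := by
  obtain ⟨S, hS, hSeq⟩ := hF (measurableSet_singleton (F ω))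
  have hω : ω ∈ Y ⁻¹' S := by
    rw [hSeq]; exact rfl
  have hω' : ω' ∈ Y ⁻¹' S := by
    simp only [Set.mem_preimage] at hω ⊢; rwa [← h]
  rw [hSeq] at hω'
  exact (hω' : F ω' = F ω).symm

lemma myIntegrable_of_bounded [IsFiniteMeasure μ] {f : Ω → ℝ}
    (hf : AEStronglyMeasurable f μ) (M : ℝ) (h : ∀ ω, |f ω| ≤ M) : Integrable f μ :=
  ⟨hf, HasFiniteIntegral.of_bounded (C := M)
    (Filter.Eventually.of_forall (by simpa [Real.norm_eq_abs] using h))⟩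

end Aux

/-- **Consistency of the plug-in IPW risk estimator.**
Let `(Xᵢ, Yᵢ, Rᵢ)` be i.i.d. copies of `(X, Y, R)` with `Y` in a finite label set,
`R ∈ {0,1}`, `R ⟂ X | Y`, and `E[R|Y] = φ(Y)` a.s. with `c ≤ φ(k) ≤ 1`, `c > 0`.
For a bounded measurable loss `|ℓ| ≤ L` and any estimators `φ̂ⁿ` with `φ̂ⁿ(k) ≥ c`
converging in probability to `φ(k)` for each class `k`, the plug-in IPW empirical risk
`n⁻¹ ∑ᵢ Rᵢ ℓ(Xᵢ,Yᵢ)/φ̂ⁿ(Yᵢ)` converges in probability to `E[ℓ(X,Y)]`. -/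
theorem plugin_ipw_risk_consistent
    {Ω : Type*} [MeasurableSpace Ω] [StandardBorelSpace Ω]
    {𝒳 : Type*} [MeasurableSpace 𝒳]
    {C : Type*} [Fintype C] [MeasurableSpace C] [MeasurableSingletonClass C]
    (μ : Measure Ω) [IsProbabilityMeasure μ]
    (Xs : ℕ → Ω → 𝒳) (Ys : ℕ → Ω → C) (Rs : ℕ → Ω → ℝ)
    (hmeas : ∀ i, Measurable fun ω => (Xs i ω, Ys i ω, Rs i ω))
    (hY0 : Measurable (Ys 0))
    (hindep : iIndepFun
      (fun i ω => (Xs i ω, Ys i ω, Rs i ω)) μ)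
    (hident : ∀ i, IdentDistrib (fun ω => (Xs i ω, Ys i ω, Rs i ω))
      (fun ω => (Xs 0 ω, Ys 0 ω, Rs 0 ω)) μ μ)
    (hR01 : ∀ i ω, Rs i ω = 0 ∨ Rs i ω = 1)
    (hCI : CondIndepFun (MeasurableSpace.comap (Ys 0) inferInstance) hY0.comap_le
      (Rs 0) (Xs 0) μ)
    (φ : C → ℝ) (c : ℝ) (hc : 0 < c)
    (hφ_lb : ∀ k, c ≤ φ k) (hφ_ub : ∀ k, φ k ≤ 1)
    (hmech : μ[Rs 0 | MeasurableSpace.comap (Ys 0) inferInstance]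
      =ᵐ[μ] fun ω => φ (Ys 0 ω))
    (ℓ : 𝒳 → C → ℝ) (hℓ : Measurable fun p : 𝒳 × C => ℓ p.1 p.2)
    (L : ℝ) (hL : ∀ x k, |ℓ x k| ≤ L)
    (phihat : ℕ → C → Ω → ℝ)
    (hphihat_meas : ∀ n k, Measurable (phihat n k))
    (hphihat_lb : ∀ n k ω, c ≤ phihat n k ω)
    (hphihat_tendsto : ∀ k : C,
      TendstoInMeasure μ (fun n => phihat n k) atTop (fun _ => φ k)) :
    TendstoInMeasure μ
      (fun (n : ℕ) ω => (1 / (n : ℝ)) *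
        ∑ i ∈ Finset.range n, Rs i ω * ℓ (Xs i ω) (Ys i ω) / phihat n (Ys i ω) ω)
      atTop
      (fun _ => ∫ ω, ℓ (Xs 0 ω) (Ys 0 ω) ∂μ) := by
  classical
  -- basic measurability
  have hXm : ∀ i, Measurable (Xs i) := fun i => (measurable_fst.comp (hmeas i))
  have hYm : ∀ i, Measurable (Ys i) := fun i =>
    ((measurable_fst.comp measurable_snd).comp (hmeas i))
  have hRm : ∀ i, Measurable (Rs i) := fun i =>
    ((measurable_snd.comp measurable_snd).comp (hmeas i))
  have hφm : Measurable φ := measurable_of_countable φ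
  have hΩ : Nonempty Ω := by
    by_contra h
    rw [not_nonempty_iff] at h
    have h1 : μ Set.univ = 1 := measure_univ
    rw [Set.eq_empty_of_isEmpty (Set.univ : Set Ω)] at h1
    simp at h1
  obtain ⟨ω₀⟩ := hΩ
  have hL0 : 0 ≤ L := (abs_nonneg _).trans (hL (Xs 0 ω₀) (Ys 0 ω₀))
  have hm := hY0.comap_le
  -- the atom sets
  have hskm : ∀ k : C, MeasurableSet[MeasurableSpace.comap (Ys 0) inferInstance]
      {ω | Ys 0 ω = k} := by
    intro k
    exact ⟨{k}, measurableSet_singleton k, rfl⟩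
  have hskM : ∀ k : C, MeasurableSet {ω | Ys 0 ω = k} := fun k => hm _ (hskm k)
  -- key conditional-independence identity on each atom
  have key : ∀ (k : C) (g : 𝒳 → ℝ), Measurable g →
      ∫ ω in {ω | Ys 0 ω = k}, Rs 0 ω * g (Xs 0 ω) ∂μ
        = φ k * ∫ ω in {ω | Ys 0 ω = k}, g (Xs 0 ω) ∂μ := by
    intro k g hg
    by_cases hp : μ {ω | Ys 0 ω = k} = 0
    · have h0 : μ.restrict {ω | Ys 0 ω = k} = 0 := Measure.restrict_eq_zero.mpr hp
      rw [h0]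
      simp
    · set sk := {ω | Ys 0 ω = k} with hsk_def
      set p : ℝ := (μ sk).toReal with hp_def
      have hppos : 0 < p := ENNReal.toReal_pos hp (measure_ne_top μ _)
      have hRint : Integrable (Rs 0) μ := myIntegrable_of_bounded
        (hRm 0).aestronglyMeasurable 1
        (fun ω => by rcases hR01 0 ω with h | h <;> simp [h])
      -- mechanism on the atom
      have hmechk : ∫ ω in sk, Rs 0 ω ∂μ = φ k * p := by
        have e1 : ∫ ω in sk, Rs 0 ω ∂μ
            = ∫ ω in sk, (μ[Rs 0|MeasurableSpace.comap (Ys 0) inferInstance]) ω ∂μ :=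
          (setIntegral_condExp hm hRint (hskm k)).symm
        have e2 : ∫ ω in sk, (μ[Rs 0|MeasurableSpace.comap (Ys 0) inferInstance]) ω ∂μ
            = ∫ ω in sk, φ (Ys 0 ω) ∂μ :=
          setIntegral_congr_ae (hskM k) (hmech.mono fun ω hω => fun _ => hω)
        have e3 : ∫ ω in sk, φ (Ys 0 ω) ∂μ = ∫ ω in sk, φ k ∂μ := by
          refine setIntegral_congr_fun (hskM k) fun ω hω => ?_
          simp only [hsk_def, Set.mem_setOf_eq] at hω
          rw [hω]
        rw [e1, e2, e3, setIntegral_const, smul_eq_mul, mul_comm]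
        rfl
      -- the event R = 1
      set A : Set Ω := Rs 0 ⁻¹' {1} with hA_def
      have hAm : MeasurableSet A := hRm 0 (measurableSet_singleton 1)
      have hRind : ∀ ω, Rs 0 ω = Set.indicator A (fun _ => (1:ℝ)) ω := by
        intro ω
        rcases hR01 0 ω with h | h <;>
          simp [Set.indicator_apply, hA_def, Set.mem_preimage, h]
      have hAsk : (μ (sk ∩ A)).toReal = φ k * p := by
        have e1 : ∫ ω in sk, Rs 0 ω ∂μ
            = ∫ ω in sk, Set.indicator A (fun _ => (1:ℝ)) ω ∂μ :=
          integral_congr_ae (Filter.Eventually.of_forall fun ω => hRind ω)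
        rw [e1, setIntegral_indicator hAm, setIntegral_const, smul_eq_mul, mul_one] at hmechk
        exact hmechk
      -- conditional independence: measure product identity on the atom
      have hprod := (condIndepFun_iff_condExp_inter_preimage_eq_mul
        (μ := μ) (hm' := hY0.comap_le) (hRm 0) (hXm 0)).mp hCI
      have hC : ∀ t : Set 𝒳, MeasurableSet t →
          μ (Xs 0 ⁻¹' t ∩ (sk ∩ A)) = ENNReal.ofReal (φ k) * μ (Xs 0 ⁻¹' t ∩ sk) := by
        intro t ht
        set B : Set Ω := Xs 0 ⁻¹' t with hB_def
        have hBm : MeasurableSet B := hXm 0 ht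
        have hmul := hprod {1} t (measurableSet_singleton 1) ht
        -- pick a point of the atom where the product identity holds
        obtain ⟨ω₁, hω₁sk, hω₁⟩ : ∃ ω₁, ω₁ ∈ sk ∧
            (μ⟦A ∩ B|MeasurableSpace.comap (Ys 0) inferInstance⟧) ω₁
              = (μ⟦A|MeasurableSpace.comap (Ys 0) inferInstance⟧) ω₁
                * (μ⟦B|MeasurableSpace.comap (Ys 0) inferInstance⟧) ω₁ := by
          by_contra hcon
          push_neg at hcon
          refine hp (measure_mono_null (fun ω hω => ?_) (ae_iff.mp hmul))
          exact fun h => hcon ω hω h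
        -- evaluation of conditional expectations of indicators on the atom
        have heval : ∀ D : Set Ω, MeasurableSet D →
            (μ⟦D|MeasurableSpace.comap (Ys 0) inferInstance⟧) ω₁ * p
              = (μ (sk ∩ D)).toReal := by
          intro D hD
          have hDint : Integrable (Set.indicator D fun _ => (1:ℝ)) μ :=
            (integrable_const (1:ℝ)).indicator hD
          have hconst : ∀ ω ∈ sk,
              (μ⟦D|MeasurableSpace.comap (Ys 0) inferInstance⟧) ω
                = (μ⟦D|MeasurableSpace.comap (Ys 0) inferInstance⟧) ω₁ := by
            intro ω hω
            refine myConstant_on_fiber (Y := Ys 0)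
              stronglyMeasurable_condExp.measurable ?_
            simp only [hsk_def, Set.mem_setOf_eq] at hω hω₁sk
            rw [hω, hω₁sk]
          have e1 : ∫ ω in sk, (μ⟦D|MeasurableSpace.comap (Ys 0) inferInstance⟧) ω ∂μ
              = (μ⟦D|MeasurableSpace.comap (Ys 0) inferInstance⟧) ω₁ * p := by
            rw [setIntegral_congr_fun (hskM k) hconst, setIntegral_const, smul_eq_mul, mul_comm]
            rfl
          have e2 : ∫ ω in sk, (μ⟦D|MeasurableSpace.comap (Ys 0) inferInstance⟧) ω ∂μ
              = (μ (sk ∩ D)).toReal := by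
            rw [setIntegral_condExp hm hDint (hskm k), setIntegral_indicator hD,
              setIntegral_const, smul_eq_mul, mul_one]
            rfl
          rw [← e1, e2]
        -- combine
        have eA := heval A hAm
        have eB := heval B hBm
        have eAB := heval (A ∩ B) (hAm.inter hBm)
        have hkey : (μ (sk ∩ (A ∩ B))).toReal * p
            = (μ (sk ∩ A)).toReal * (μ (sk ∩ B)).toReal := by
          rw [← eA, ← eB, ← eAB, hω₁]
          ring
        rw [hAsk] at hkey
        have hkey2 : (μ (sk ∩ (A ∩ B))).toReal = φ k * (μ (sk ∩ B)).toReal := by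
          have := hkey
          field_simp at this ⊢
          nlinarith [this]
        have hφk0 : (0:ℝ) ≤ φ k := hc.le.trans (hφ_lb k)
        have hfin1 : μ (sk ∩ (A ∩ B)) ≠ ⊤ := measure_ne_top μ _
        have hfin2 : ENNReal.ofReal (φ k) * μ (sk ∩ B) ≠ ⊤ :=
          ENNReal.mul_ne_top ENNReal.ofReal_ne_top (measure_ne_top μ _)
        have hENN : μ (sk ∩ (A ∩ B)) = ENNReal.ofReal (φ k) * μ (sk ∩ B) := by
          rw [← ENNReal.toReal_eq_toReal_iff' hfin1 hfin2, ENNReal.toReal_mul,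
            ENNReal.toReal_ofReal hφk0]
          exact hkey2
        calc μ (Xs 0 ⁻¹' t ∩ (sk ∩ A)) = μ (sk ∩ (A ∩ B)) := by
              rw [hB_def]; congr 1; ext ω
              simp only [Set.mem_inter_iff, Set.mem_preimage]; tauto
          _ = ENNReal.ofReal (φ k) * μ (sk ∩ B) := hENN
          _ = ENNReal.ofReal (φ k) * μ (Xs 0 ⁻¹' t ∩ sk) := by
              rw [hB_def]; congr 2; exact Set.inter_comm _ _
      -- transfer to integrals via equality of measures
      have hmeaseq : (μ.restrict (sk ∩ A)).map (Xs 0)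
          = (ENNReal.ofReal (φ k)) • ((μ.restrict sk).map (Xs 0)) := by
        ext t ht
        rw [Measure.map_apply (hXm 0) ht, Measure.smul_apply,
          Measure.map_apply (hXm 0) ht, Measure.restrict_apply (hXm 0 ht),
          Measure.restrict_apply (hXm 0 ht), smul_eq_mul]
        exact hC t ht
      have e1 : ∫ ω in sk, Rs 0 ω * g (Xs 0 ω) ∂μ
          = ∫ ω in sk, Set.indicator A (fun ω => g (Xs 0 ω)) ω ∂μ := by
        refine integral_congr_ae (Filter.Eventually.of_forall fun ω => ?_)
        rcases hR01 0 ω with h | h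
        · have hωA : ω ∉ A := by simp [hA_def, Set.mem_preimage, h]
          simp [h, Set.indicator_of_notMem hωA]
        · have hωA : ω ∈ A := by simp [hA_def, Set.mem_preimage, h]
          simp [h, Set.indicator_of_mem hωA]
      rw [e1, setIntegral_indicator hAm]
      have e2 : ∫ ω in sk ∩ A, g (Xs 0 ω) ∂μ
          = ∫ x, g x ∂((μ.restrict (sk ∩ A)).map (Xs 0)) :=
        (integral_map (hXm 0).aemeasurable hg.aestronglyMeasurable).symm
      have e3 : ∫ ω in sk, g (Xs 0 ω) ∂μ
          = ∫ x, g x ∂((μ.restrict sk).map (Xs 0)) :=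
        (integral_map (hXm 0).aemeasurable hg.aestronglyMeasurable).symm
      rw [e2, e3, hmeaseq, integral_smul_measure, ENNReal.toReal_ofReal
        (hc.le.trans (hφ_lb k)), smul_eq_mul]
  -- common bound
  have hℓk_meas : ∀ k : C, Measurable fun ω => ℓ (Xs 0 ω) k := fun k =>
    hℓ.comp ((hXm 0).prodMk measurable_const)
  have habs_bd : ∀ (r : ℝ), (r = 0 ∨ r = 1) → ∀ (x : 𝒳) (kk : C) (d : ℝ), c ≤ d →
      |r * ℓ x kk / d| ≤ L / c := by
    intro r hr x kk d hd
    have hd0 : 0 < d := lt_of_lt_of_le hc hd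
    rcases hr with h | h
    · rw [h]
      simp only [zero_mul, zero_div, abs_zero]
      positivity
    · rw [h, one_mul, abs_div, abs_of_pos hd0]
      exact div_le_div₀ hL0 (hL x kk) hc hd
  set W : ℕ → Ω → ℝ := fun i ω => Rs i ω * ℓ (Xs i ω) (Ys i ω) / φ (Ys i ω) with hW_def
  set I : ℝ := ∫ ω, ℓ (Xs 0 ω) (Ys 0 ω) ∂μ with hI_def
  -- identity for the theoretical risk
  have hEW : ∫ ω, W 0 ω ∂μ = I := by
    have hpt : ∀ ω, W 0 ω
        = ∑ k : C, Set.indicator {ω' | Ys 0 ω' = k}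
            (fun ω' => Rs 0 ω' * ℓ (Xs 0 ω') k / φ k) ω := by
      intro ω
      show Rs 0 ω * ℓ (Xs 0 ω) (Ys 0 ω) / φ (Ys 0 ω) = _
      simp only [Set.indicator_apply, Set.mem_setOf_eq, Finset.sum_ite_eq,
        Finset.mem_univ, if_true]
    have hint1 : ∀ k : C, Integrable (Set.indicator {ω' | Ys 0 ω' = k}
        (fun ω' => Rs 0 ω' * ℓ (Xs 0 ω') k / φ k)) μ := by
      intro k
      refine myIntegrable_of_bounded
        ((((hRm 0).mul (hℓk_meas k)).div_const _).indicator
          (hskM k)).aestronglyMeasurable (L/c) ?_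
      intro ω
      by_cases hω : ω ∈ {ω' | Ys 0 ω' = k}
      · rw [Set.indicator_of_mem hω]
        exact habs_bd _ (hR01 0 ω) _ _ _ (hφ_lb k)
      · rw [Set.indicator_of_notMem hω]
        simp only [abs_zero]
        positivity
    have hint2 : ∀ k : C, Integrable (Set.indicator {ω' | Ys 0 ω' = k}
        (fun ω' => ℓ (Xs 0 ω') k)) μ := by
      intro k
      refine myIntegrable_of_bounded
        ((hℓk_meas k).indicator (hskM k)).aestronglyMeasurable L ?_
      intro ω
      by_cases hω : ω ∈ {ω' | Ys 0 ω' = k}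
      · rw [Set.indicator_of_mem hω]; exact hL _ _
      · rw [Set.indicator_of_notMem hω]; simpa using hL0
    calc ∫ ω, W 0 ω ∂μ
        = ∫ ω, ∑ k : C, Set.indicator {ω' | Ys 0 ω' = k}
            (fun ω' => Rs 0 ω' * ℓ (Xs 0 ω') k / φ k) ω ∂μ :=
          integral_congr_ae (Filter.Eventually.of_forall hpt)
      _ = ∑ k : C, ∫ ω, Set.indicator {ω' | Ys 0 ω' = k}
            (fun ω' => Rs 0 ω' * ℓ (Xs 0 ω') k / φ k) ω ∂μ :=
          integral_finset_sum _ (fun k _ => hint1 k)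
      _ = ∑ k : C, ∫ ω in {ω' | Ys 0 ω' = k}, Rs 0 ω * ℓ (Xs 0 ω) k / φ k ∂μ :=
          Finset.sum_congr rfl fun k _ => integral_indicator (hskM k)
      _ = ∑ k : C, ∫ ω in {ω' | Ys 0 ω' = k}, ℓ (Xs 0 ω) k ∂μ := by
          refine Finset.sum_congr rfl fun k _ => ?_
          have hφk : φ k ≠ 0 := (lt_of_lt_of_le hc (hφ_lb k)).ne'
          rw [integral_div, key k (fun x => ℓ x k)
            (hℓ.comp (measurable_id.prodMk measurable_const)),
            mul_div_cancel_left₀ _ hφk]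
      _ = ∑ k : C, ∫ ω, Set.indicator {ω' | Ys 0 ω' = k}
            (fun ω' => ℓ (Xs 0 ω') k) ω ∂μ :=
          Finset.sum_congr rfl fun k _ => (integral_indicator (hskM k)).symm
      _ = ∫ ω, ∑ k : C, Set.indicator {ω' | Ys 0 ω' = k}
            (fun ω' => ℓ (Xs 0 ω') k) ω ∂μ :=
          (integral_finset_sum _ (fun k _ => hint2 k)).symm
      _ = I := by
          refine integral_congr_ae (Filter.Eventually.of_forall fun ω => ?_)
          simp only [Set.indicator_apply, Set.mem_setOf_eq, Finset.sum_ite_eq,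
            Finset.mem_univ, if_true]
  -- SLLN part
  have hw : Measurable (fun q : 𝒳 × C × ℝ => q.2.2 * ℓ q.1 q.2.1 / φ q.2.1) :=
    (measurable_snd.snd.mul (hℓ.comp (measurable_fst.prodMk measurable_snd.fst))).div
      (hφm.comp measurable_snd.fst)
  have hWm : ∀ i, Measurable (W i) := fun i => hw.comp (hmeas i)
  have hW0int : Integrable (W 0) μ :=
    myIntegrable_of_bounded (hWm 0).aestronglyMeasurable (L/c)
      (fun ω => habs_bd _ (hR01 0 ω) _ _ _ (hφ_lb _))
  have hslln := strong_law_ae_real W hW0int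
    (fun i j hij => (hindep.indepFun hij).comp hw hw)
    (fun i => (hident i).comp hw)
  rw [hEW] at hslln
  have hA : TendstoInMeasure μ
      (fun (n : ℕ) ω => (1 / (n : ℝ)) * ∑ i ∈ Finset.range n, W i ω) atTop
      (fun _ => I) := by
    refine tendstoInMeasure_of_tendsto_ae
      (fun n => (measurable_const.mul
        (Finset.measurable_sum _ (fun i _ => hWm i))).aestronglyMeasurable) ?_
    filter_upwards [hslln] with ω hω
    have heq : (fun n : ℕ => (1/(n:ℝ)) * ∑ i ∈ Finset.range n, W i ω)
        = fun n : ℕ => (∑ i ∈ Finset.range n, W i ω) / n := by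
      funext n
      rw [one_div, inv_mul_eq_div]
    rw [heq]
    exact hω
  -- final assembly
  have hH0 : TendstoInMeasure μ
      (fun n ω => L / c ^ 2 * ∑ k : C, |phihat n k ω - φ k|) atTop
      (fun _ => (0:ℝ)) :=
    myTendstoInMeasure_const_mul _ (myTendstoInMeasure_finset_sum Finset.univ _
      (fun k _ => myTendstoInMeasure_abs_sub (hphihat_tendsto k)))
  have hAbs : TendstoInMeasure μ
      (fun (n : ℕ) ω => |(1 / (n:ℝ)) * ∑ i ∈ Finset.range n, W i ω - I|) atTop
      (fun _ => (0:ℝ)) := myTendstoInMeasure_abs_sub hA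
  refine myTendstoInMeasure_of_dominated
    (h := fun (n : ℕ) ω => |(1 / (n:ℝ)) * ∑ i ∈ Finset.range n, W i ω - I|
      + L / c ^ 2 * ∑ k : C, |phihat n k ω - φ k|) ?_
    (myTendstoInMeasure_add_zero hAbs hH0)
  intro n ω
  have hS0 : (0:ℝ) ≤ ∑ k : C, |phihat n k ω - φ k| :=
    Finset.sum_nonneg fun k _ => abs_nonneg _
  have hH_nonneg : (0:ℝ) ≤ L / c ^ 2 * ∑ k : C, |phihat n k ω - φ k| := by positivity
  have hd : ∀ i, |Rs i ω * ℓ (Xs i ω) (Ys i ω) / phihat n (Ys i ω) ω - W i ω|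
      ≤ L / c ^ 2 * ∑ k : C, |phihat n k ω - φ k| := by
    intro i
    have hph_pos : 0 < phihat n (Ys i ω) ω := lt_of_lt_of_le hc (hphihat_lb n _ ω)
    have hφ_pos : 0 < φ (Ys i ω) := lt_of_lt_of_le hc (hφ_lb _)
    have h1 : Rs i ω * ℓ (Xs i ω) (Ys i ω) / phihat n (Ys i ω) ω - W i ω
        = (Rs i ω * ℓ (Xs i ω) (Ys i ω))
          * ((phihat n (Ys i ω) ω)⁻¹ - (φ (Ys i ω))⁻¹) := by
      show _ - Rs i ω * ℓ (Xs i ω) (Ys i ω) / φ (Ys i ω) = _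
      rw [div_eq_mul_inv, div_eq_mul_inv, mul_sub]
    have h2 : (phihat n (Ys i ω) ω)⁻¹ - (φ (Ys i ω))⁻¹
        = (φ (Ys i ω) - phihat n (Ys i ω) ω)
          / (phihat n (Ys i ω) ω * φ (Ys i ω)) := by
      field_simp
    have hb1 : |Rs i ω| ≤ 1 := by rcases hR01 i ω with h | h <;> simp [h]
    have hb2 : |ℓ (Xs i ω) (Ys i ω)| ≤ L := hL _ _
    have hb3 : |(phihat n (Ys i ω) ω)⁻¹ - (φ (Ys i ω))⁻¹|
        ≤ (∑ k : C, |phihat n k ω - φ k|) / c ^ 2 := by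
      rw [h2, abs_div]
      have hnum : |φ (Ys i ω) - phihat n (Ys i ω) ω| ≤ ∑ k : C, |phihat n k ω - φ k| := by
        rw [abs_sub_comm]
        exact Finset.single_le_sum (f := fun k => |phihat n k ω - φ k|)
          (fun k _ => abs_nonneg _) (Finset.mem_univ _)
      have hden : c ^ 2 ≤ |phihat n (Ys i ω) ω * φ (Ys i ω)| := by
        rw [abs_mul, abs_of_pos hph_pos, abs_of_pos hφ_pos, sq]
        exact mul_le_mul (hphihat_lb n _ ω) (hφ_lb _) hc.le hph_pos.le
      exact div_le_div₀ hS0 hnum (by positivity) hden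
    calc |Rs i ω * ℓ (Xs i ω) (Ys i ω) / phihat n (Ys i ω) ω - W i ω|
        = |Rs i ω * ℓ (Xs i ω) (Ys i ω)|
          * |(phihat n (Ys i ω) ω)⁻¹ - (φ (Ys i ω))⁻¹| := by rw [h1, abs_mul]
      _ ≤ (1 * L) * ((∑ k : C, |phihat n k ω - φ k|) / c ^ 2) := by
          refine mul_le_mul ?_ hb3 (abs_nonneg _) (by positivity)
          rw [abs_mul]
          exact mul_le_mul hb1 hb2 (abs_nonneg _) zero_le_one
      _ = L / c ^ 2 * ∑ k : C, |phihat n k ω - φ k| := by ring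
  have hTA : |(1 / (n:ℝ)) * ∑ i ∈ Finset.range n, Rs i ω * ℓ (Xs i ω) (Ys i ω)
        / phihat n (Ys i ω) ω
      - (1 / (n:ℝ)) * ∑ i ∈ Finset.range n, W i ω|
      ≤ L / c ^ 2 * ∑ k : C, |phihat n k ω - φ k| := by
    rw [← mul_sub, ← Finset.sum_sub_distrib, abs_mul]
    have h1n : |1 / (n:ℝ)| = 1 / (n:ℝ) := abs_of_nonneg (by positivity)
    rw [h1n]
    have hsum : |∑ i ∈ Finset.range n, (Rs i ω * ℓ (Xs i ω) (Ys i ω)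
          / phihat n (Ys i ω) ω - W i ω)|
        ≤ (n:ℝ) * (L / c ^ 2 * ∑ k : C, |phihat n k ω - φ k|) := by
      refine (Finset.abs_sum_le_sum_abs _ _).trans ?_
      calc ∑ i ∈ Finset.range n, |Rs i ω * ℓ (Xs i ω) (Ys i ω)
            / phihat n (Ys i ω) ω - W i ω|
          ≤ ∑ _i ∈ Finset.range n, L / c ^ 2 * ∑ k : C, |phihat n k ω - φ k| :=
            Finset.sum_le_sum fun i _ => hd i
        _ = (n:ℝ) * (L / c ^ 2 * ∑ k : C, |phihat n k ω - φ k|) := by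
            rw [Finset.sum_const, Finset.card_range, nsmul_eq_mul]
    rcases Nat.eq_zero_or_pos n with hn | hn
    · subst hn
      simp only [Nat.cast_zero, div_zero, zero_mul]
      exact hH_nonneg
    · have hn0 : (n:ℝ) ≠ 0 := Nat.cast_ne_zero.mpr hn.ne'
      calc 1 / (n:ℝ) * |∑ i ∈ Finset.range n, (Rs i ω * ℓ (Xs i ω) (Ys i ω)
            / phihat n (Ys i ω) ω - W i ω)|
          ≤ 1 / (n:ℝ) * ((n:ℝ) * (L / c ^ 2 * ∑ k : C, |phihat n k ω - φ k|)) := by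
            refine mul_le_mul_of_nonneg_left hsum (by positivity)
        _ = L / c ^ 2 * ∑ k : C, |phihat n k ω - φ k| := by
            field_simp
  calc |(1 / (n:ℝ)) * ∑ i ∈ Finset.range n, Rs i ω * ℓ (Xs i ω) (Ys i ω)
        / phihat n (Ys i ω) ω - I|
      ≤ |(1 / (n:ℝ)) * ∑ i ∈ Finset.range n, Rs i ω * ℓ (Xs i ω) (Ys i ω)
          / phihat n (Ys i ω) ω - (1 / (n:ℝ)) * ∑ i ∈ Finset.range n, W i ω|
        + |(1 / (n:ℝ)) * ∑ i ∈ Finset.range n, W i ω - I| := abs_sub_le _ _ _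
    _ ≤ L / c ^ 2 * ∑ k : C, |phihat n k ω - φ k|
        + |(1 / (n:ℝ)) * ∑ i ∈ Finset.range n, W i ω - I| := by
          exact add_le_add_left hTA _
    _ = |(1 / (n:ℝ)) * ∑ i ∈ Finset.range n, W i ω - I|
        + L / c ^ 2 * ∑ k : C, |phihat n k ω - φ k| := add_comm _ _
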